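/- arXiv:1111.3482 — 2 statements merged into one kernel-verified Lean document; each statement's English description precedes it below -/
import Mathlib

section
/- If a continuous surjection f on a compact metric space Λ has the specification property, then the shift homeomorphism f̂ on the inverse limit Λ̂ also has the specification property. -/
abbrev InvLim {X : Type*} (f : X → X) : Type _ := {x : ℕ → X // ∀ i, f (x (i + 1)) = x i}

noncomputable def invDist {X : Type*} [MetricSpace X] {f : X → X}
    (x y : InvLim f) : ℝ :=
  ∑' i : ℕ, dist (x.1 i) (y.1 i) / 2 ^ i

/-- Specification property for a map `f` on a space with distance `d`: for every `ε > 0`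
there is a spacing `M(ε)` such that every `M(ε)`-spaced specification — a finite family of
orbit segments, with `P i` the initial point of the `i`-th segment `[a i, b i]` — is
`ε`-shadowed by a point, and for every `q ≥ M(ε) + (b_m − a_0)` by a period-`q` orbit. -/
def HasSpecification {X : Type*} (d : X → X → ℝ) (f : X → X) : Prop :=
  ∀ ε > (0 : ℝ), ∃ M : ℕ, ∀ (m : ℕ) (a b : Fin (m + 1) → ℕ) (P : Fin (m + 1) → X),
    (∀ i, a i ≤ b i) →
    (∀ i : Fin m, b i.castSucc + M < a i.succ) →
    ((∃ x : X, ∀ (i : Fin (m + 1)) (t : ℕ), a i ≤ t → t ≤ b i →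
        d (f^[t] x) (f^[t - a i] (P i)) < ε) ∧
      ∀ q : ℕ, M + (b (Fin.last m) - a 0) ≤ q →
        ∃ x : X, f^[q] x = x ∧ ∀ (i : Fin (m + 1)) (t : ℕ), a i ≤ t → t ≤ b i →
          d (f^[t] x) (f^[t - a i] (P i)) < ε)

set_option maxHeartbeats 1000000

section Aux
private lemma invlim_iter {X : Type*} {f : X → X} (x : InvLim f) (n k : ℕ) :
    f^[k] (x.1 (n + k)) = x.1 n := by
  induction k with
  | zero => rfl
  | succ k ih =>
    rw [Function.iterate_succ_apply, show n + (k + 1) = (n + k) + 1 from rfl, x.2 (n + k)]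
    exact ih

private lemma coordB {Λ : Type*} {f : Λ → Λ} {F : InvLim f → InvLim f}
    (hF : ∀ x : InvLim f, ((F x).1 0 = f (x.1 0)) ∧ ∀ i : ℕ, (F x).1 (i + 1) = x.1 i)
    (x : InvLim f) : ∀ (s i : ℕ), i ≤ s → (F^[s] x).1 i = f^[s - i] (x.1 0) := by
  intro s
  induction s with
  | zero => intro i hi; interval_cases i; rfl
  | succ s ih =>
    intro i hi
    rw [Function.iterate_succ_apply']
    cases i with
    | zero =>
      rw [(hF _).1, ih 0 (Nat.zero_le s), Nat.sub_zero, Nat.sub_zero]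
      exact (Function.iterate_succ_apply' f s _).symm
    | succ j =>
      rw [(hF _).2 j, ih j (by omega), Nat.succ_sub_succ]

private lemma coordC {Λ : Type*} {f : Λ → Λ} {F : InvLim f → InvLim f}
    (hF : ∀ x : InvLim f, ((F x).1 0 = f (x.1 0)) ∧ ∀ i : ℕ, (F x).1 (i + 1) = x.1 i)
    (x : InvLim f) : ∀ (s i : ℕ), s ≤ i → (F^[s] x).1 i = x.1 (i - s) := by
  intro s
  induction s with
  | zero => intro i _; rfl
  | succ s ih =>
    intro i hi
    rw [Function.iterate_succ_apply']
    obtain ⟨j, rfl⟩ : ∃ j, i = j + 1 := ⟨i - 1, by omega⟩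
    rw [(hF _).2 j, ih j (by omega), Nat.succ_sub_succ]

private lemma coordN {Λ : Type*} {f : Λ → Λ} {F : InvLim f → InvLim f}
    (hF : ∀ x : InvLim f, ((F x).1 0 = f (x.1 0)) ∧ ∀ i : ℕ, (F x).1 (i + 1) = x.1 i)
    (x : InvLim f) (s i N : ℕ) (h : i ≤ s + N) :
    (F^[s] x).1 i = f^[N + s - i] (x.1 N) := by
  rcases le_or_gt i s with h1 | h1
  · rw [coordB hF x s i h1]
    have h0 : x.1 0 = f^[N] (x.1 N) := by
      have := invlim_iter x 0 N
      rw [Nat.zero_add] at this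
      exact this.symm
    rw [h0, ← Function.iterate_add_apply, show s - i + N = N + s - i by omega]
  · rw [coordC hF x s i h1.le]
    have := invlim_iter x (i - s) (N - (i - s))
    rw [show (i - s) + (N - (i - s)) = N by omega] at this
    rw [← this, show N - (i - s) = N + s - i by omega]

private lemma coordE {Λ : Type*} {f : Λ → Λ} {F : InvLim f → InvLim f}
    (hF : ∀ x : InvLim f, ((F x).1 0 = f (x.1 0)) ∧ ∀ i : ℕ, (F x).1 (i + 1) = x.1 i)
    (x : InvLim f) (q i : ℕ) : (F^[q] x).1 i = f^[q] (x.1 i) := by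
  have := coordN hF x q i i (by omega)
  rwa [show i + q - i = q by omega] at this

private lemma iter_mul {X : Type*} {f : X → X} {x : X} {q : ℕ} (h : f^[q] x = x) :
    ∀ k, f^[q * k] x = x
  | 0 => rfl
  | k + 1 => by
    rw [Nat.mul_succ, Function.iterate_add_apply, h, iter_mul h k]

private lemma iter_mod {X : Type*} {f : X → X} {x : X} {q : ℕ} (h : f^[q] x = x) (a : ℕ) :
    f^[a] x = f^[a % q] x := by
  conv_lhs => rw [← Nat.div_add_mod a q, Nat.add_comm]
  rw [Function.iterate_add_apply, iter_mul h]

private lemma term_le {Λ : Type*} [MetricSpace Λ] {f : Λ → Λ}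
    (hdiam : ∀ x y : Λ, dist x y ≤ 1) (x y : InvLim f) (i : ℕ) :
    dist (x.1 i) (y.1 i) / 2 ^ i ≤ (1 / 2 : ℝ) ^ i := by
  rw [div_pow, one_pow]
  exact (div_le_div_iff_of_pos_right (by positivity)).mpr (hdiam _ _)

private lemma dist_summable {Λ : Type*} [MetricSpace Λ] {f : Λ → Λ}
    (hdiam : ∀ x y : Λ, dist x y ≤ 1) (x y : InvLim f) :
    Summable (fun i : ℕ => dist (x.1 i) (y.1 i) / 2 ^ i) :=
  Summable.of_nonneg_of_le (fun i => by positivity) (term_le hdiam x y) summable_geometric_two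

private lemma invDist_le {Λ : Type*} [MetricSpace Λ] {f : Λ → Λ}
    (hdiam : ∀ x y : Λ, dist x y ≤ 1) (x y : InvLim f) (N : ℕ) (c : ℝ) (hc : 0 ≤ c)
    (h : ∀ i < N, dist (x.1 i) (y.1 i) ≤ c) :
    invDist x y ≤ 2 * c + 2 / 2 ^ N := by
  have hs := dist_summable hdiam x y
  rw [invDist, ← Summable.sum_add_tsum_nat_add N hs]
  have h1 : ∑ i ∈ Finset.range N, dist (x.1 i) (y.1 i) / 2 ^ i ≤ 2 * c := by
    calc ∑ i ∈ Finset.range N, dist (x.1 i) (y.1 i) / 2 ^ i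
        ≤ ∑ i ∈ Finset.range N, c * (1 / 2 : ℝ) ^ i := by
          refine Finset.sum_le_sum fun i hi => ?_
          rw [div_pow, one_pow, mul_one_div]
          exact (div_le_div_iff_of_pos_right (by positivity)).mpr (h i (Finset.mem_range.mp hi))
      _ = c * ∑ i ∈ Finset.range N, (1 / 2 : ℝ) ^ i := by rw [Finset.mul_sum]
      _ ≤ c * 2 := mul_le_mul_of_nonneg_left (sum_geometric_two_le N) hc
      _ = 2 * c := by ring
  have h2 : ∑' i : ℕ, dist (x.1 (i + N)) (y.1 (i + N)) / 2 ^ (i + N) ≤ 2 / 2 ^ N := by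
    have hsum : Summable (fun i : ℕ => (1 / 2 : ℝ) ^ (i + N)) :=
      (summable_nat_add_iff N).2 summable_geometric_two
    calc ∑' i : ℕ, dist (x.1 (i + N)) (y.1 (i + N)) / 2 ^ (i + N)
        ≤ ∑' i : ℕ, (1 / 2 : ℝ) ^ (i + N) :=
          Summable.tsum_le_tsum (fun i => term_le hdiam x y (i + N)) ((summable_nat_add_iff N).2 hs) hsum
      _ = 2 / 2 ^ N := by
          simp only [pow_add, tsum_mul_right, tsum_geometric_two]
          rw [div_pow, one_pow]
          ring
  exact add_le_add h1 h2

end Aux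

/-- if a continuous surjection `f` of a compact metric space `Λ` (of diameter
at most 1) has the specification property, then the shift homeomorphism `f̂` on the inverse
limit `Λ̂` (with the metric `d(xh,yh) = Σ_i d(x₋i,y₋i)/2^i`) also has the specification
property. -/
theorem shift_specification {Λ : Type*} [MetricSpace Λ] [CompactSpace Λ]
    (f : Λ → Λ) (hf : Continuous f) (hsurj : Function.Surjective f)
    (hdiam : ∀ x y : Λ, dist x y ≤ 1)
    (F : InvLim f → InvLim f)
    (hF : ∀ x : InvLim f, ((F x).1 0 = f (x.1 0)) ∧ ∀ i : ℕ, (F x).1 (i + 1) = x.1 i)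
    (hspec : HasSpecification (fun x y : Λ => dist x y) f) :
    HasSpecification (fun x y : InvLim f => invDist x y) F := by
  intro ε hε
  obtain ⟨N0, hN0⟩ := exists_pow_lt_of_lt_one (show (0:ℝ) < ε / 4 by linarith)
    (show (1/2 : ℝ) < 1 by norm_num)
  set N := N0 + 1 with hNdef
  have hNpow : (1/2 : ℝ) ^ N < ε / 4 := by
    refine lt_of_le_of_lt ?_ hN0
    exact pow_le_pow_of_le_one (by norm_num) (by norm_num) (Nat.le_succ _)
  have hN1 : 1 ≤ N := Nat.le_add_left 1 N0
  obtain ⟨M', hM'⟩ := hspec (ε / 8) (by linarith)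
  refine ⟨M' + N, ?_⟩
  intro m a b P hab hgap
  obtain ⟨⟨x, hx⟩, hper⟩ := hM' m a (fun j => b j + N) (fun j => (P j).1 N)
    (fun i => le_trans (hab i) (Nat.le_add_right _ _))
    (fun i => by show b i.castSucc + N + M' < a i.succ; have := hgap i; omega)
  -- shared shadowing argument
  have key : ∀ (y : Λ) (yh : InvLim f), yh.1 N = y →
      (∀ (j : Fin (m + 1)) (t : ℕ), a j ≤ t → t ≤ b j + N →
        dist (f^[t] y) (f^[t - a j] ((P j).1 N)) < ε / 8) →
      ∀ (j : Fin (m + 1)) (t : ℕ), a j ≤ t → t ≤ b j →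
        invDist (F^[t] yh) (F^[t - a j] (P j)) < ε := by
    intro y yh hyN hy j t hat htb
    have hbound : ∀ i < N, dist ((F^[t] yh).1 i) ((F^[t - a j] (P j)).1 i) ≤ ε / 8 := by
      intro i hi
      rw [coordN hF yh t i N (by omega), coordN hF (P j) (t - a j) i N (by omega), hyN]
      have h3 : (N + t - i) - a j = N + (t - a j) - i := by omega
      have := hy j (N + t - i) (by omega) (by omega)
      rw [h3] at this
      exact this.le
    have h4 := invDist_le hdiam (F^[t] yh) (F^[t - a j] (P j)) N (ε / 8) (by linarith) hbound
    have h5 : (2:ℝ) / 2 ^ N = 2 * (1/2) ^ N := by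
      rw [div_pow, one_pow]; ring
    rw [h5] at h4
    linarith
  constructor
  · -- existence part: lift x to a backward orbit through f^[N-i] x
    set g := Function.surjInv hsurj with hgdef
    have hg : ∀ y, f (g y) = y := fun y => Function.surjInv_eq hsurj y
    set u : ℕ → Λ := fun i => if i ≤ N then f^[N - i] x else g^[i - N] x with hudef
    have hu : ∀ i, f (u (i + 1)) = u i := by
      intro i
      by_cases h1 : i + 1 ≤ N
      · simp only [hudef, if_pos h1, if_pos (by omega : i ≤ N)]
        rw [← Function.iterate_succ_apply' f (N - (i + 1)) x]
        congr 1
        omega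
      · simp only [hudef, if_neg h1]
        rw [show i + 1 - N = (i - N) + 1 by omega, Function.iterate_succ_apply' g (i - N) x,
          hg]
        by_cases h2 : i ≤ N
        · rw [if_pos h2, show i - N = 0 by omega, show N - i = 0 by omega]
          rfl
        · rw [if_neg h2]


    refine ⟨⟨u, hu⟩, ?_⟩
    have huN : (⟨u, hu⟩ : InvLim f).1 N = x := by
      show u N = x
      simp only [hudef, if_pos le_rfl, Nat.sub_self, Function.iterate_zero_apply]
    exact key x ⟨u, hu⟩ huN hx
  · -- periodic part
    intro q hq
    have hq' : M' + ((b (Fin.last m) + N) - a 0) ≤ q := by omega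
    obtain ⟨x₂, hx₂q, hx₂⟩ := hper q hq'
    have hq1 : 1 ≤ q := by omega
    set v : ℕ → Λ := fun i => f^[(N + i * (q - 1)) % q] x₂ with hvdef
    have hv : ∀ i, f (v (i + 1)) = v i := by
      intro i
      show f (f^[(N + (i + 1) * (q - 1)) % q] x₂) = f^[(N + i * (q - 1)) % q] x₂
      have hA : N + (i + 1) * (q - 1) + 1 = (N + i * (q - 1)) + q := by
        have h' : (i + 1) * (q - 1) = i * (q - 1) + (q - 1) := by ring
        omega
      rw [← iter_mod hx₂q (N + (i + 1) * (q - 1)),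
        ← Function.iterate_succ_apply' f (N + (i + 1) * (q - 1)) x₂,
        Nat.succ_eq_add_one, hA, Function.iterate_add_apply, hx₂q, iter_mod hx₂q]
    have hvN : (⟨v, hv⟩ : InvLim f).1 N = x₂ := by
      show f^[(N + N * (q - 1)) % q] x₂ = x₂
      have hNq : N + N * (q - 1) = N * q := by
        have h' : N * q = N * (q - 1 + 1) := by rw [Nat.sub_add_cancel hq1]
        rw [h', Nat.mul_add, Nat.mul_one]
        omega
      rw [hNq, Nat.mul_mod_left, Function.iterate_zero_apply]
    refine ⟨⟨v, hv⟩, ?_, key x₂ ⟨v, hv⟩ hvN hx₂⟩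
    apply Subtype.ext
    funext i
    rw [coordE hF ⟨v, hv⟩ q i]
    show f^[q] (f^[(N + i * (q - 1)) % q] x₂) = f^[(N + i * (q - 1)) % q] x₂
    rw [← Function.iterate_add_apply, Nat.add_comm, Function.iterate_add_apply, hx₂q]
end

section
/- For the logistic map F_ν(x) = νx(1−x) with ν > 2 + √5, the invariant set Λ_ν = ∩_{n≥0} F_ν^{-n}([0,1]) is a nonempty compact set on which |F_ν'(x)| > 1 for all x ∈ Λ_ν (F_ν is expanding on Λ_ν in the Euclidean metric). -/
/-- for the logistic map `F_ν(x) = νx(1−x)` with `ν > 2 + √5`, the set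
`Λ_ν = {x ∈ [0,1] : F_ν^n(x) ∈ [0,1] ∀ n}` is a nonempty compact `F_ν`-invariant set on
which `F_ν` is expanding in the Euclidean metric: `inf_{Λ_ν} |F_ν'| > 1`. -/
theorem logistic_expanding (ν : ℝ) (hν : 2 + Real.sqrt 5 < ν) :
    let F : ℝ → ℝ := fun x => ν * x * (1 - x)
    let Λ : Set ℝ := {x | x ∈ Set.Icc (0 : ℝ) 1 ∧ ∀ n : ℕ, F^[n] x ∈ Set.Icc (0 : ℝ) 1}
    Λ.Nonempty ∧ IsCompact Λ ∧ Set.MapsTo F Λ Λ ∧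
      ∃ c > (1 : ℝ), ∀ x ∈ Λ, c ≤ |deriv F x| := by
  intro F Λ
  have h5 : (2 : ℝ) < Real.sqrt 5 := by
    have : (2 : ℝ) = Real.sqrt 4 := by
      rw [show (4 : ℝ) = 2 ^ 2 by norm_num, Real.sqrt_sq (by norm_num)]
    rw [this]
    exact Real.sqrt_lt_sqrt (by norm_num) (by norm_num)
  have hν4 : (4 : ℝ) < ν := by linarith
  have hν0 : (0 : ℝ) < ν := by linarith
  have hd : ∀ x : ℝ, HasDerivAt F (ν * (1 - 2 * x)) x := by
    intro x
    have h := (((hasDerivAt_id x).const_mul ν).mul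
      ((hasDerivAt_const x (1 : ℝ)).sub (hasDerivAt_id x)))
    convert h using 1
    · rfl
    · rfl
    · rfl
    · simp; ring
  have hF0 : F 0 = 0 := by simp [F]
  have hcont : Continuous F :=
    (continuous_const.mul continuous_id).mul (continuous_const.sub continuous_id)
  refine ⟨⟨0, ?_⟩, ?_, ?_, ?_⟩
  · refine ⟨by norm_num, fun n => ?_⟩
    rw [Function.iterate_fixed hF0 n]
    norm_num
  · have hΛ : Λ = Set.Icc (0 : ℝ) 1 ∩ ⋂ n : ℕ, F^[n] ⁻¹' Set.Icc (0 : ℝ) 1 := by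
      ext x
      simp [Λ, Set.mem_iInter]
    have hclosed : IsClosed Λ := by
      rw [hΛ]
      exact isClosed_Icc.inter (isClosed_iInter fun n =>
        (isClosed_Icc).preimage (hcont.iterate n))
    exact isCompact_Icc.of_isClosed_subset hclosed fun x hx => hx.1
  · intro x hx
    refine ⟨?_, fun n => ?_⟩
    · have := hx.2 1
      simpa using this
    · have := hx.2 (n + 1)
      rwa [Function.iterate_succ_apply] at this
  · refine ⟨Real.sqrt (ν ^ 2 - 4 * ν), ?_, ?_⟩
    · have h1 : (1 : ℝ) < ν ^ 2 - 4 * ν := by nlinarith [Real.sq_sqrt (by norm_num : (5:ℝ) ≥ 0), Real.sqrt_nonneg 5]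
      have : Real.sqrt 1 < Real.sqrt (ν ^ 2 - 4 * ν) :=
        Real.sqrt_lt_sqrt (by norm_num) h1
      simpa using this
    · intro x hx
      have h1 : F x ≤ 1 := by
        have := (hx.2 1).2
        simpa using this
      have hFx : ν * x * (1 - x) ≤ 1 := h1
      have hder : deriv F x = ν * (1 - 2 * x) := (hd x).deriv
      rw [hder, ← Real.sqrt_sq_eq_abs]
      apply Real.sqrt_le_sqrt
      nlinarith [hν0, hFx]
end
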